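/- In a Best-of-(2k+1) game, for every fixed serving schedule (the outcomes of A's first k+1 serves and B's first k serves), the winner under the Standard Rule is A if and only if b \geq a, where a is the number of losses among A's k+1 serves and b is the number of losses among B's k serves. -/
import Mathlib

/-- Deterministic playout of a service game to `goal` points with a fixed serving
schedule.  `As i = true` means A wins his `i`-th serve (0-indexed); `Bs j = true`
means B wins her `j`-th serve.  `next prevSrv aWon` gives the next server
(`true` = A serves).  `i, j` count serves already used by A and B, `x, y` are the
scores, `srv` is the current server; returns `true` iff A wins the game.
`fuel` bounds the number of points played. -/
def playWinner (goal : ℕ) (next : Bool → Bool → Bool) (As Bs : ℕ → Bool) :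
    ℕ → ℕ → ℕ → ℕ → ℕ → Bool → Bool
  | 0, _, _, x, y, _ => decide (y < x)
  | fuel + 1, i, j, x, y, srv =>
    if goal ≤ x then true
    else if goal ≤ y then false
    else if srv then
      let aWon := As i
      playWinner goal next As Bs fuel (i + 1) j (if aWon then x + 1 else x)
        (if aWon then y else y + 1) (next srv aWon)
    else
      let aWon := !Bs j
      playWinner goal next As Bs fuel i (j + 1) (if aWon then x + 1 else x)
        (if aWon then y else y + 1) (next srv aWon)

/-- Standard Rule: the winner of the point serves next. -/
def nextSR : Bool → Bool → Bool := fun _ aWon => aWon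

def cL (f : ℕ → Bool) (n : ℕ) : ℕ :=
  ((Finset.range n).filter (fun i => f i = false)).card

lemma cL_mono (f : ℕ → Bool) {m n : ℕ} (h : m ≤ n) : cL f m ≤ cL f n :=
  Finset.card_le_card (Finset.filter_subset_filter _ (Finset.range_subset_range.2 h))

lemma cL_succ_true (f : ℕ → Bool) (n : ℕ) (h : f n = true) : cL f (n+1) = cL f n := by
  unfold cL
  rw [Finset.range_add_one, Finset.filter_insert, if_neg (by simp [h])]

lemma cL_succ_false (f : ℕ → Bool) (n : ℕ) (h : f n = false) : cL f (n+1) = cL f n + 1 := by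
  unfold cL
  rw [Finset.range_add_one, Finset.filter_insert, if_pos (by simp [h]),
    Finset.card_insert_of_notMem (by simp)]

lemma key (k : ℕ) (As Bs : ℕ → Bool) :
    ∀ fuel i j x y (srv : Bool),
      i ≤ k + 1 → j ≤ k →
      2 * k + 1 ≤ fuel + x + y →
      (srv = true → x = i ∧ y = j ∧ cL As i = cL Bs j) →
      (srv = false → i = x + 1 ∧ y = j + 1 ∧ cL As i = cL Bs j + 1) →
      (playWinner (k+1) nextSR As Bs fuel i j x y srv = true ↔ cL As (k+1) ≤ cL Bs k) := by
  intro fuel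
  induction fuel with
  | zero =>
    intro i j x y srv hi hj hfuel hT hF
    cases srv with
    | true =>
      obtain ⟨hx, hy, he⟩ := hT rfl
      have hik : i = k + 1 := by omega
      subst hik
      have h1 := cL_mono Bs hj
      simp only [playWinner, decide_eq_true_eq]
      omega
    | false =>
      obtain ⟨hx, hy, he⟩ := hF rfl
      have hjk : j = k := by omega
      subst hjk
      have h1 := cL_mono As hi
      simp only [playWinner, decide_eq_true_eq]
      omega
  | succ fuel ih =>
    intro i j x y srv hi hj hfuel hT hF
    rw [playWinner]
    by_cases hx1 : k + 1 ≤ x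
    · rw [if_pos hx1]
      cases srv with
      | true =>
        obtain ⟨hx, hy, he⟩ := hT rfl
        have hik : i = k + 1 := by omega
        subst hik
        have h1 := cL_mono Bs hj
        simp only [true_iff]
        omega
      | false =>
        obtain ⟨hx, hy, he⟩ := hF rfl
        omega
    · rw [if_neg hx1]
      by_cases hy1 : k + 1 ≤ y
      · rw [if_pos hy1]
        cases srv with
        | true =>
          obtain ⟨hx, hy, he⟩ := hT rfl
          omega
        | false =>
          obtain ⟨hx, hy, he⟩ := hF rfl
          have hjk : j = k := by omega
          subst hjk
          have h1 := cL_mono As hi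
          simp only [Bool.false_eq_true, false_iff]
          omega
      · rw [if_neg hy1]
        cases srv with
        | true =>
          obtain ⟨hx, hy, he⟩ := hT rfl
          cases hA : As i with
          | true =>
            simp only [hA]
            exact ih (i+1) j (x+1) y true (by omega) hj (by omega)
              (fun _ => ⟨by omega, hy, by rw [cL_succ_true As i hA]; exact he⟩)
              (by simp)
          | false =>
            simp only [hA]
            exact ih (i+1) j x (y+1) false (by omega) hj (by omega)
              (by simp)
              (fun _ => ⟨by omega, by omega, by rw [cL_succ_false As i hA]; omega⟩)
        | false =>
          obtain ⟨hx, hy, he⟩ := hF rfl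
          cases hB : Bs j with
          | true =>
            simp only [hB]
            exact ih i (j+1) x (y+1) false hi (by omega) (by omega)
              (by simp)
              (fun _ => ⟨hx, by omega, by rw [cL_succ_true Bs j hB]; exact he⟩)
          | false =>
            simp only [hB]
            exact ih i (j+1) (x+1) y true hi (by omega) (by omega)
              (fun _ => ⟨by omega, by omega, by rw [cL_succ_false Bs j hB]; omega⟩)
              (by simp)

/-- In a Best-of-(2k+1) game, for every fixed serving schedule, the winner under the
Standard Rule (A serving first) is A if and only if `a ≤ b`, where `a` is the number
of losses among A's first `k+1` serves and `b` the number of losses among B's first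
`k` serves. -/
theorem SR_winner_iff (k : ℕ) (As Bs : ℕ → Bool) :
    (playWinner (k + 1) nextSR As Bs (2 * k + 2) 0 0 0 0 true = true)
      ↔ ((Finset.range (k + 1)).filter (fun i => As i = false)).card
          ≤ ((Finset.range k).filter (fun j => Bs j = false)).card := by
  exact key k As Bs (2*k+2) 0 0 0 0 true (by omega) (by omega) (by omega)
    (fun _ => ⟨rfl, rfl, rfl⟩) (by simp)
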